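/- Let i, j, N be integers with 0 < i ≤ j and 2j ≤ N. Then gcd(C(N,i), C(N,j)) ≥ 2^i. -/

import Mathlib

lemma desc_aux (i j : ℕ) (hij : i ≤ j) :
    2 ^ i * j.descFactorial i ≤ (2 * j).descFactorial i := by
  induction i with
  | zero => simp
  | succ k ih =>
    rw [Nat.descFactorial_succ, Nat.descFactorial_succ, pow_succ]
    have hkj : k ≤ j := Nat.le_of_succ_le hij
    have h1 : 2 * (j - k) ≤ 2 * j - k := by omega
    calc 2 ^ k * 2 * ((j - k) * j.descFactorial k)
        = (2 * (j - k)) * (2 ^ k * j.descFactorial k) := by ring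
      _ ≤ (2 * j - k) * (2 * j).descFactorial k :=
          Nat.mul_le_mul h1 (ih hkj)

lemma choose_aux (i j : ℕ) (hij : i ≤ j) :
    2 ^ i * j.choose i ≤ (2 * j).choose i := by
  have h := desc_aux i j hij
  rw [Nat.descFactorial_eq_factorial_mul_choose, Nat.descFactorial_eq_factorial_mul_choose] at h
  have hf : 0 < Nat.factorial i := Nat.factorial_pos i
  have h2 : Nat.factorial i * (2 ^ i * j.choose i) ≤ Nat.factorial i * (2 * j).choose i := by
    calc Nat.factorial i * (2 ^ i * j.choose i)
        = 2 ^ i * (Nat.factorial i * j.choose i) := by ring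
      _ ≤ Nat.factorial i * (2 * j).choose i := h
  exact Nat.le_of_mul_le_mul_left h2 hf

theorem stmt_1 (i j N : ℕ) (hi : 0 < i) (hij : i ≤ j) (hjN : 2 * j ≤ N) :
    2 ^ i ≤ Nat.gcd (N.choose i) (N.choose j) := by
  have hjN' : j ≤ N := le_trans (Nat.le_mul_of_pos_left j (by norm_num)) hjN
  have hiN : i ≤ N := le_trans hij hjN'
  set g := Nat.gcd (N.choose i) (N.choose j) with hg
  have hc1 : 0 < N.choose i := Nat.choose_pos hiN
  have hc2 : 0 < N.choose j := Nat.choose_pos hjN'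
  have hgpos : 0 < g := Nat.gcd_pos_of_pos_left _ hc1
  obtain ⟨a, ha⟩ : g ∣ N.choose i := Nat.gcd_dvd_left _ _
  obtain ⟨b, hb⟩ : g ∣ N.choose j := Nat.gcd_dvd_right _ _
  have hcop : Nat.Coprime a b := by
    have hcd := Nat.coprime_div_gcd_div_gcd (m := N.choose i) (n := N.choose j) hgpos
    have e1 : N.choose i / g = a := by rw [ha]; exact Nat.mul_div_cancel_left _ hgpos
    have e2 : N.choose j / g = b := by rw [hb]; exact Nat.mul_div_cancel_left _ hgpos
    rwa [← hg, e1, e2] at hcd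
  -- identity: C(N,j) * C(j,i) = C(N,i) * C(N-i,j-i)
  have hid := Nat.choose_mul (n := N) hij
  -- a * C(N-i,j-i) = b * C(j,i)
  have hkey : a * (N - i).choose (j - i) = b * j.choose i := by
    have : g * (a * (N - i).choose (j - i)) = g * (b * j.choose i) := by
      calc g * (a * (N - i).choose (j - i)) = (g * a) * (N - i).choose (j - i) := by ring
        _ = N.choose i * (N - i).choose (j - i) := by rw [← ha]
        _ = N.choose j * j.choose i := hid.symm
        _ = (g * b) * j.choose i := by rw [← hb]
        _ = g * (b * j.choose i) := by ring
    exact Nat.eq_of_mul_eq_mul_left hgpos this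
  have hadvd : a ∣ j.choose i := by
    have : a ∣ b * j.choose i := ⟨(N - i).choose (j - i), hkey.symm⟩
    exact (Nat.Coprime.dvd_of_dvd_mul_left hcop this)
  have hji : 0 < j.choose i := Nat.choose_pos hij
  have hale : a ≤ j.choose i := Nat.le_of_dvd hji hadvd
  -- 2^i * C(j,i) ≤ C(N,i)
  have hbig : 2 ^ i * j.choose i ≤ N.choose i :=
    le_trans (choose_aux i j hij) (Nat.choose_le_choose i hjN)
  have : 2 ^ i * j.choose i ≤ g * j.choose i := by
    calc 2 ^ i * j.choose i ≤ N.choose i := hbig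
      _ = g * a := ha
      _ ≤ g * j.choose i := Nat.mul_le_mul_left g hale
  exact Nat.le_of_mul_le_mul_right (by simpa [mul_comm] using this) hji
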